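/- The set Λ = {(n, n) : n ∈ ℤ} ⊆ ℝ² is a spectrum of the self-affine measure μ = μ_{R,B} for R = [[2,1],[0,2]] and B = {(0,0),(1,0)}, and it satisfies D_1^+(Λ) ≥ √2 and dim_Be(Λ) = 1. -/

import Mathlib

open MeasureTheory Filter Set Metric
open scoped ENNReal

noncomputable section

/-- The plane with the Euclidean metric. -/
abbrev Plane : Type := EuclideanSpace ℝ (Fin 2)

/-- The point `(a, b)` of the Euclidean plane. -/
def pt (a b : ℝ) : Plane := WithLp.toLp 2 ![a, b]

/-- The self-affine measure `μ_{R,B}` for `R = [[2,1],[0,2]]`, `B = {(0,0),(1,0)}`: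
the pushforward of Lebesgue measure on `[0,1]` under `x ↦ (x, 0)`. -/
def muRB : Measure Plane :=
  Measure.map (fun x : ℝ => pt x 0) (volume.restrict (Set.Icc (0:ℝ) 1))

instance : IsProbabilityMeasure (volume.restrict (Set.Icc (0:ℝ) 1)) :=
  ⟨by simp [Real.volume_Icc]⟩

lemma measurable_pt0 : Measurable (fun x : ℝ => pt x 0) := by
  unfold pt
  refine (PiLp.continuous_toLp 2 _).measurable.comp (measurable_pi_lambda _ (fun i => ?_))
  fin_cases i
  · simp only [Matrix.cons_val_zero]
    exact measurable_id
  · simp only [Matrix.cons_val_one, Matrix.head_cons]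
    exact measurable_const

instance : IsProbabilityMeasure muRB :=
  Measure.isProbabilityMeasure_map measurable_pt0.aemeasurable

/-- The Fourier transform `μ̂(ξ) = ∫ e^{-2πi⟨ξ,x⟩} dμ(x)` of a measure on the plane. -/
def fourierTransform (μ : Measure Plane) (ξ : Plane) : ℂ :=
  ∫ x, Complex.exp ((-(2 * Real.pi * (inner ℝ ξ x : ℝ)) : ℝ) * Complex.I) ∂μ

/-- The exponential function `e_λ(x) = e^{-2πi⟨λ,x⟩}`. -/
def expFn (lam : Plane) : Plane → ℂ :=
  fun x => Complex.exp ((-(2 * Real.pi * (inner ℝ lam x : ℝ)) : ℝ) * Complex.I)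

lemma expFn_memLp (μ : Measure Plane) [IsFiniteMeasure μ] (lam : Plane) :
    MemLp (expFn lam) 2 μ := by
  refine MemLp.of_bound ?_ 1 ?_
  · apply Continuous.aestronglyMeasurable
    unfold expFn
    have h1 : Continuous fun x : Plane => (inner ℝ lam x : ℝ) :=
      continuous_const.inner continuous_id
    exact Complex.continuous_exp.comp
      ((Complex.continuous_ofReal.comp ((continuous_const.mul h1).neg)).mul continuous_const)
  · refine Eventually.of_forall fun x => ?_
    unfold expFn
    rw [Complex.norm_exp_ofReal_mul_I]

/-- The exponential `e_λ` as an element of `L²(μ)`. -/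
def expLp (μ : Measure Plane) [IsFiniteMeasure μ] (lam : Plane) : Lp ℂ 2 μ :=
  (expFn_memLp μ lam).toLp _

/-- `Λ` is an orthogonal set of `μ`: the exponentials `{e_λ : λ ∈ Λ}` form an
orthonormal family in `L²(μ)`. -/
def IsOrthogonalSet (μ : Measure Plane) [IsFiniteMeasure μ] (Λ : Set Plane) : Prop :=
  Orthonormal ℂ (fun lam : Λ => expLp μ lam)

/-- `Λ` is a spectrum of `μ`: the exponentials `{e_λ : λ ∈ Λ}` form an
orthonormal basis of `L²(μ)`. -/
def IsSpectrum (μ : Measure Plane) [IsFiniteMeasure μ] (Λ : Set Plane) : Prop :=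
  Orthonormal ℂ (fun lam : Λ => expLp μ lam) ∧
    (Submodule.span ℂ (Set.range (fun lam : Λ => expLp μ lam))).topologicalClosure = ⊤

/-- The upper `r`-Beurling density
`D_r^+(Λ) = limsup_{h→∞} sup_{x} #(Λ ∩ B(x,h)) / h^r`. -/
def beurlingDensity (r : ℝ) (Λ : Set Plane) : ℝ≥0∞ :=
  limsup (fun h : ℝ =>
    ⨆ x : Plane, ((Λ ∩ Metric.ball x h).encard : ℝ≥0∞) / ENNReal.ofReal (h ^ r)) atTop

/-- The upper `r`-density (centered at the origin)
`B_r^+(Λ) = limsup_{h→∞} #(Λ ∩ B(0,h)) / h^r`. -/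
def upperDensity (r : ℝ) (Λ : Set Plane) : ℝ≥0∞ :=
  limsup (fun h : ℝ =>
    ((Λ ∩ Metric.ball (0 : Plane) h).encard : ℝ≥0∞) / ENNReal.ofReal (h ^ r)) atTop

/-- The Beurling dimension `dim_Be(Λ) = sup {r > 0 : D_r^+(Λ) = ∞}`
(equal to `0` when the set is empty, by the convention `sSup ∅ = 0` in `ℝ`). -/
def beurlingDim (Λ : Set Plane) : ℝ :=
  sSup {r : ℝ | 0 < r ∧ beurlingDensity r Λ = ⊤}

/-- The Banach dimension `dim_Ba(Λ) = sup {r > 0 : B_r^+(Λ) = ∞}`. -/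
def banachDim (Λ : Set Plane) : ℝ :=
  sSup {r : ℝ | 0 < r ∧ upperDensity r Λ = ⊤}

/-- The sign of an integer, as a real number. -/
def isgn (n : ℤ) : ℝ := (Int.sign n : ℝ)

end
noncomputable section Aux
open Complex

lemma pt_apply0 (a b : ℝ) : pt a b 0 = a := by simp [pt]
lemma pt_apply1 (a b : ℝ) : pt a b 1 = b := by simp [pt]

lemma inner_pt (lam : Plane) (x : ℝ) : (inner ℝ lam (pt x 0) : ℝ) = lam 0 * x := by
  rw [PiLp.inner_apply]
  simp [Fin.sum_univ_two, pt, mul_comm]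

lemma continuous_expFn (lam : Plane) : Continuous (expFn lam) := by
  unfold expFn
  have h1 : Continuous fun x : Plane => (inner ℝ lam x : ℝ) :=
    continuous_const.inner continuous_id
  exact Complex.continuous_exp.comp
    ((Complex.continuous_ofReal.comp ((continuous_const.mul h1).neg)).mul continuous_const)

lemma inner_expLp (μ : Measure Plane) [IsFiniteMeasure μ] (l1 l2 : Plane) :
    (inner ℂ (expLp μ l1) (expLp μ l2) : ℂ)
      = ∫ x, (starRingEnd ℂ) (expFn l1 x) * expFn l2 x ∂μ := by
  rw [MeasureTheory.L2.inner_def]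
  apply integral_congr_ae
  filter_upwards [MemLp.coeFn_toLp (expFn_memLp μ l1), MemLp.coeFn_toLp (expFn_memLp μ l2)]
    with x h1 h2
  simp only [expLp]
  rw [h1, h2, RCLike.inner_apply']

lemma integral_muRB (f : Plane → ℂ) (hf : AEStronglyMeasurable f muRB) :
    ∫ x, f x ∂muRB = ∫ x in Set.Icc (0:ℝ) 1, f (pt x 0) := by
  unfold muRB
  exact integral_map measurable_pt0.aemeasurable hf

lemma restrict_Icc_eq_Ioc :
    (volume : Measure ℝ).restrict (Set.Icc (0:ℝ) 1) = volume.restrict (Set.Ioc (0:ℝ) 1) :=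
  (Measure.restrict_congr_set MeasureTheory.Ioc_ae_eq_Icc).symm

lemma integral_exp_two_pi_int (k : ℤ) (hk : k ≠ 0) :
    ∫ x in Set.Icc (0:ℝ) 1, Complex.exp ((2 * Real.pi * k * x : ℝ) * Complex.I) = 0 := by
  rw [restrict_Icc_eq_Ioc, ← intervalIntegral.integral_of_le zero_le_one]
  have hc : (2 * Real.pi * k * Complex.I) ≠ 0 := by
    simp [Real.pi_ne_zero, Complex.I_ne_zero, hk]
  have h2 := integral_exp_mul_complex (a := 0) (b := 1) hc
  calc ∫ x in (0:ℝ)..1, Complex.exp ((2 * Real.pi * k * x : ℝ) * Complex.I)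
      = ∫ x in (0:ℝ)..1, Complex.exp (2 * Real.pi * k * Complex.I * x) := by
        apply intervalIntegral.integral_congr; intro x _; push_cast; ring_nf
    _ = 0 := by
        rw [h2]
        have h1 : (2 * Real.pi * (k:ℂ) * Complex.I * ((1:ℝ):ℂ)) = (k : ℤ) * (2 * Real.pi * Complex.I) := by
          push_cast; ring
        rw [h1, Complex.exp_int_mul_two_pi_mul_I]
        simp

lemma expFn_pt (n : ℤ) (x : ℝ) :
    expFn (pt n n) (pt x 0) = Complex.exp ((-(2 * Real.pi * (n * x)) : ℝ) * Complex.I) := by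
  unfold expFn
  rw [inner_pt, pt_apply0]

lemma conj_mul_expFn (m n : ℤ) (x : ℝ) :
    (starRingEnd ℂ) (expFn (pt m m) (pt x 0)) * expFn (pt n n) (pt x 0)
      = Complex.exp ((2 * Real.pi * ((m - n) : ℤ) * x : ℝ) * Complex.I) := by
  rw [expFn_pt, expFn_pt, ← Complex.exp_conj, ← Complex.exp_add]
  congr 1
  rw [map_mul, Complex.conj_I, Complex.conj_ofReal]
  push_cast
  ring

lemma inner_exp_eq (m n : ℤ) :
    (inner ℂ (expLp muRB (pt m m)) (expLp muRB (pt n n)) : ℂ) = if m = n then 1 else 0 := by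
  rw [inner_expLp]
  have hmeas : AEStronglyMeasurable
      (fun x => (starRingEnd ℂ) (expFn (pt m m) x) * expFn (pt n n) x) muRB :=
    (Complex.continuous_conj.comp (continuous_expFn _)
      |>.mul (continuous_expFn _)).aestronglyMeasurable
  rw [integral_muRB _ hmeas]
  simp only [conj_mul_expFn]
  by_cases h : m = n
  · subst h
    simp only [sub_self, Int.cast_zero, mul_zero, zero_mul, Complex.ofReal_zero,
      Complex.exp_zero, if_pos rfl]
    simp [Real.volume_Icc]
  · rw [if_neg h]
    exact integral_exp_two_pi_int (m - n) (sub_ne_zero.mpr h)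

end Aux
noncomputable section Aux2
open Complex

lemma pt_diag_inj : Function.Injective (fun n : ℤ => pt (n:ℝ) (n:ℝ)) := by
  intro a b h
  have h0 := congrArg (fun p : Plane => p 0) h
  simp [pt] at h0
  exact_mod_cast h0

lemma orthonormal_diag :
    Orthonormal ℂ (fun lam : (Set.range fun n : ℤ => pt (n:ℝ) (n:ℝ)) => expLp muRB lam) := by
  classical
  rw [orthonormal_iff_ite]
  rintro ⟨-, m, rfl⟩ ⟨-, n, rfl⟩
  rw [inner_exp_eq]
  congr 1
  simp only [Subtype.mk_eq_mk, eq_iff_iff]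
  constructor
  · rintro rfl; rfl
  · intro h; exact pt_diag_inj (congrArg Subtype.val h)

lemma inner_expLp_right (μ : Measure Plane) [IsFiniteMeasure μ] (lam : Plane) (f : Lp ℂ 2 μ) :
    (inner ℂ (expLp μ lam) f : ℂ) = ∫ x, (starRingEnd ℂ) (expFn lam x) * f x ∂μ := by
  rw [MeasureTheory.L2.inner_def]
  apply integral_congr_ae
  filter_upwards [MemLp.coeFn_toLp (expFn_memLp μ lam)] with x h1
  simp only [expLp]
  rw [h1, RCLike.inner_apply']

lemma conj_expFn_pt (n : ℤ) (x : ℝ) :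
    (starRingEnd ℂ) (expFn (pt (n:ℝ) (n:ℝ)) (pt x 0))
      = Complex.exp ((2 * Real.pi * (n * x) : ℝ) * Complex.I) := by
  rw [expFn_pt, ← Complex.exp_conj, map_mul, Complex.conj_I, Complex.conj_ofReal]
  congr 1
  push_cast
  ring

end Aux2
noncomputable section Aux3
open Complex

lemma haar1 : (AddCircle.haarAddCircle : Measure (AddCircle (1:ℝ))) = volume := by
  haveI : Fact ((0:ℝ) < 1) := ⟨zero_lt_one⟩
  rw [AddCircle.volume_eq_smul_haarAddCircle]
  simp

lemma vanish_of_coeff_zero (h : ℝ → ℂ) (hsm : StronglyMeasurable h)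
    (hmem : MemLp h 2 (volume.restrict (Set.Ioc (0:ℝ) 1)))
    (hc : ∀ n : ℤ, ∫ x in Set.Ioc (0:ℝ) 1,
      Complex.exp ((2 * Real.pi * (n * x) : ℝ) * Complex.I) * h x = 0) :
    h =ᵐ[volume.restrict (Set.Ioc (0:ℝ) 1)] 0 := by
  haveI : Fact ((0:ℝ) < 1) := ⟨zero_lt_one⟩
  set H : AddCircle (1:ℝ) → ℂ := AddCircle.liftIoc 1 0 h with hH
  have hH_meas : Measurable H := by
    have : H = (fun y : Set.Ioc (0:ℝ) (0+1) => h y) ∘ (AddCircle.measurableEquivIoc 1 0) := rfl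
    rw [this]
    exact (hsm.measurable.comp measurable_subtype_coe).comp
      (AddCircle.measurableEquivIoc 1 0).measurable
  have hmp := AddCircle.measurePreserving_mk 1 0
  rw [zero_add] at hmp
  have hHh : ∀ x ∈ Set.Ioc (0:ℝ) 1, H ((x : AddCircle (1:ℝ))) = h x := fun x hx =>
    AddCircle.liftIoc_coe_apply (by simpa using hx)
  have hae : (fun x : ℝ => H ((x : AddCircle (1:ℝ)))) =ᵐ[volume.restrict (Set.Ioc 0 1)] h :=
    (ae_restrict_iff' measurableSet_Ioc).mpr (Filter.Eventually.of_forall hHh)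
  have hHmem : MemLp H 2 (AddCircle.haarAddCircle) := by
    rw [haar1, ← hmp.map_eq]
    rw [memLp_map_measure_iff hH_meas.stronglyMeasurable.aestronglyMeasurable
      AddCircle.measurable_mk'.aemeasurable]
    exact hmem.ae_eq hae.symm
  have hcoefH : ∀ n : ℤ, fourierCoeff H n = 0 := by
    intro n
    rw [hH, fourierCoeff_liftIoc_eq, fourierCoeffOn_eq_integral]
    simp only [zero_add, sub_zero, one_div_one, one_smul]
    rw [intervalIntegral.integral_of_le zero_le_one, ← hc (-n)]
    apply setIntegral_congr_fun measurableSet_Ioc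
    intro x hx
    simp only [fourier_coe_apply, smul_eq_mul]
    congr 2
    push_cast
    ring
  set HLp : Lp ℂ 2 (AddCircle.haarAddCircle) := hHmem.toLp H with hHLp
  have hcoefLp : ∀ i : ℤ, fourierCoeff (⇑HLp) i = 0 := by
    intro i
    have : fourierCoeff (⇑HLp) i = fourierCoeff H i := by
      unfold fourierCoeff
      apply integral_congr_ae
      filter_upwards [hHmem.coeFn_toLp] with t ht
      rw [ht]
    rw [this, hcoefH]
  have hsum := tsum_sq_fourierCoeff HLp
  simp only [hcoefLp, norm_zero, zero_pow, tsum_zero] at hsum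
  have hint : Integrable (fun t => ‖HLp t‖ ^ (2:ℕ)) (AddCircle.haarAddCircle) := by
    have h2 := (Lp.memLp HLp).integrable_norm_rpow two_ne_zero ENNReal.ofNat_ne_top
    rw [show ((2:ℝ≥0∞).toReal) = ((2:ℕ):ℝ) by simp] at h2
    simpa only [Real.rpow_natCast] using h2
  have hz : (fun t => ‖HLp t‖ ^ (2:ℕ)) =ᵐ[AddCircle.haarAddCircle] 0 := by
    refine (integral_eq_zero_iff_of_nonneg (fun t => by positivity) hint).mp ?_
    rw [← hsum]
    norm_num
  have hHLp0 : (⇑HLp) =ᵐ[AddCircle.haarAddCircle] 0 := by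
    filter_upwards [hz] with t ht
    simp only [Pi.zero_apply] at ht ⊢
    have := pow_eq_zero_iff (n := 2) (by norm_num) |>.mp ht
    simpa using this
  have hH0 : H =ᵐ[AddCircle.haarAddCircle] 0 := (hHmem.coeFn_toLp).symm.trans hHLp0
  have hcomp : (fun x : ℝ => H ((x : AddCircle (1:ℝ)))) =ᵐ[volume.restrict (Set.Ioc 0 1)]
      (fun _ => (0:ℂ)) := by
    have := MeasureTheory.ae_eq_comp (μ := volume.restrict (Set.Ioc (0:ℝ) 1))
      (f := fun x : ℝ => (x : AddCircle (1:ℝ))) (g := H) (g' := fun _ => (0:ℂ))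
      AddCircle.measurable_mk'.aemeasurable ?_
    · exact this
    · rw [hmp.map_eq, ← haar1]
      exact hH0
  exact hae.symm.trans hcomp

lemma span_closure_top :
    (Submodule.span ℂ (Set.range (fun lam : (Set.range fun n : ℤ => pt (n:ℝ) (n:ℝ)) =>
      expLp muRB lam))).topologicalClosure = ⊤ := by
  rw [Submodule.topologicalClosure_eq_top_iff, Submodule.eq_bot_iff]
  intro f hf
  have hinner : ∀ n : ℤ, (inner ℂ (expLp muRB (pt (n:ℝ) (n:ℝ))) f : ℂ) = 0 := fun n =>
    (Submodule.mem_orthogonal _ _).mp hf _ (Submodule.subset_span ⟨⟨_, ⟨n, rfl⟩⟩, rfl⟩)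
  have hF : MemLp (⇑f) 2 muRB := Lp.memLp f
  have hFsm : StronglyMeasurable (⇑f) := Lp.stronglyMeasurable f
  set h : ℝ → ℂ := fun x => f (pt x 0) with hh
  have hhsm : StronglyMeasurable h := hFsm.comp_measurable measurable_pt0
  have hmem : MemLp h 2 (volume.restrict (Set.Ioc (0:ℝ) 1)) := by
    rw [← restrict_Icc_eq_Ioc]
    exact (memLp_map_measure_iff hFsm.aestronglyMeasurable
      measurable_pt0.aemeasurable).mp hF
  have hc : ∀ n : ℤ, ∫ x in Set.Ioc (0:ℝ) 1,
      Complex.exp ((2 * Real.pi * (n * x) : ℝ) * Complex.I) * h x = 0 := by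
    intro n
    have h1 := hinner n
    rw [inner_expLp_right] at h1
    have hmeas : AEStronglyMeasurable
        (fun x => (starRingEnd ℂ) (expFn (pt (n:ℝ) (n:ℝ)) x) * f x) muRB :=
      ((Complex.continuous_conj.comp (continuous_expFn _)).aestronglyMeasurable).mul
        (Lp.aestronglyMeasurable f)
    rw [integral_muRB _ hmeas] at h1
    rw [← restrict_Icc_eq_Ioc, ← h1]
    apply setIntegral_congr_fun measurableSet_Icc
    intro x _
    simp only [conj_expFn_pt, hh]
  have h0 := vanish_of_coeff_zero h hhsm hmem hc
  rw [Lp.eq_zero_iff_ae_eq_zero]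
  have hs : MeasurableSet {y : Plane | ¬ f y = 0} :=
    (hFsm.measurable (measurableSet_singleton (0:ℂ))).compl
  rw [Filter.EventuallyEq, ae_iff]
  simp only [Pi.zero_apply]
  have hmapped : muRB {y : Plane | ¬ f y = 0}
      = (volume.restrict (Set.Icc (0:ℝ) 1)) ((fun x : ℝ => pt x 0) ⁻¹' {y | ¬ f y = 0}) := by
    exact Measure.map_apply measurable_pt0 hs
  rw [hmapped, restrict_Icc_eq_Ioc]
  have : ((fun x : ℝ => pt x 0) ⁻¹' {y | ¬ f y = 0}) = {x : ℝ | ¬ h x = 0} := rfl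
  rw [this]
  have := h0
  rw [Filter.EventuallyEq, ae_iff] at this
  simpa using this

end Aux3
noncomputable section Aux4

def Lam : Set Plane := Set.range fun n : ℤ => pt (n:ℝ) (n:ℝ)

lemma dist_pt (a b : ℝ) (x : Plane) :
    dist (pt a b) x = Real.sqrt ((a - x 0)^2 + (b - x 1)^2) := by
  simp [EuclideanSpace.dist_eq, Fin.sum_univ_two, pt, Real.dist_eq, sq_abs]

lemma dist_pt_zero (n : ℤ) :
    dist (pt (n:ℝ) (n:ℝ)) (0 : Plane) = Real.sqrt 2 * |(n:ℝ)| := by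
  rw [dist_pt]
  have h0 : (0:Plane) 0 = 0 := rfl
  have h1 : (0:Plane) 1 = 0 := rfl
  rw [h0, h1]
  rw [show ((n:ℝ) - 0)^2 + ((n:ℝ) - 0)^2 = 2 * (n:ℝ)^2 by ring,
    Real.sqrt_mul (by norm_num), Real.sqrt_sq_eq_abs]

lemma abs_le_dist (n : ℤ) (x : Plane) : |(n:ℝ) - x 0| ≤ dist (pt (n:ℝ) (n:ℝ)) x := by
  rw [dist_pt, ← Real.sqrt_sq_eq_abs]
  apply Real.sqrt_le_sqrt
  nlinarith [sq_nonneg ((n:ℝ) - x 1)]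

/-- The test radii. -/
def hm (m : ℕ) : ℝ := Real.sqrt 2 * (m + 1/2)

lemma sqrt2_ge_one : (1:ℝ) ≤ Real.sqrt 2 := by
  rw [show (1:ℝ) = Real.sqrt 1 by simp]
  exact Real.sqrt_le_sqrt (by norm_num)

lemma hm_pos (m : ℕ) : 0 < hm m := by
  unfold hm
  have := sqrt2_ge_one
  positivity

lemma hm_ge (m : ℕ) : (m : ℝ) ≤ hm m := by
  unfold hm
  have h := sqrt2_ge_one
  nlinarith [Nat.cast_nonneg (α := ℝ) m]

lemma sqrt2_mul_hm (m : ℕ) : Real.sqrt 2 * hm m = 2*m+1 := by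
  unfold hm
  rw [← mul_assoc, Real.mul_self_sqrt (by norm_num)]
  ring

lemma encard_lower (m : ℕ) :
    ENNReal.ofReal (2*m+1 : ℝ) ≤ ((Lam ∩ Metric.ball (0:Plane) (hm m)).encard : ℝ≥0∞) := by
  have hsub : (fun n : ℤ => pt (n:ℝ) (n:ℝ)) '' ↑(Finset.Icc (-(m:ℤ)) m)
      ⊆ Lam ∩ Metric.ball (0:Plane) (hm m) := by
    rintro y ⟨n, hn, rfl⟩
    simp only [Finset.coe_Icc, Set.mem_Icc] at hn
    refine ⟨⟨n, rfl⟩, ?_⟩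
    rw [Metric.mem_ball, dist_pt_zero]
    have habs : |(n:ℝ)| ≤ m := by
      rw [abs_le]
      constructor <;> [exact_mod_cast hn.1; exact_mod_cast hn.2]
    have hs2 : (0:ℝ) < Real.sqrt 2 := lt_of_lt_of_le one_pos sqrt2_ge_one
    calc Real.sqrt 2 * |(n:ℝ)| ≤ Real.sqrt 2 * m := by nlinarith
      _ < hm m := by unfold hm; nlinarith
  have hcard : (Finset.Icc (-(m:ℤ)) m).card = 2*m+1 := by
    rw [Int.card_Icc]; omega
  have hN : ((2*m+1 : ℕ) : ℕ∞) ≤ (Lam ∩ Metric.ball (0:Plane) (hm m)).encard := by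
    calc ((2*m+1 : ℕ) : ℕ∞) = ((Finset.Icc (-(m:ℤ)) m).card : ℕ∞) := by rw [hcard]
      _ = (↑(Finset.Icc (-(m:ℤ)) m) : Set ℤ).encard := (Set.encard_coe_eq_coe_finsetCard _).symm
      _ = ((fun n : ℤ => pt (n:ℝ) (n:ℝ)) '' ↑(Finset.Icc (-(m:ℤ)) m)).encard :=
          (Set.InjOn.encard_image (pt_diag_inj.injOn)).symm
      _ ≤ _ := Set.encard_mono hsub
  rw [show ENNReal.ofReal (2*m+1:ℝ) = ((2*m+1:ℕ) : ℝ≥0∞) from by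
    rw [← ENNReal.ofReal_natCast]; congr 1; push_cast; ring]
  exact_mod_cast hN

lemma encard_upper (x : Plane) (h : ℝ) (hh : 1 ≤ h) :
    ((Lam ∩ Metric.ball x h).encard : ℝ≥0∞) ≤ ENNReal.ofReal (3*h) := by
  set a := ⌈x 0 - h⌉ with ha
  set b := ⌊x 0 + h⌋ with hb
  have hsub : Lam ∩ Metric.ball x h ⊆ (fun n : ℤ => pt (n:ℝ) (n:ℝ)) '' ↑(Finset.Icc a b) := by
    rintro y ⟨⟨n, rfl⟩, hy⟩
    refine ⟨n, ?_, rfl⟩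
    simp only [Finset.coe_Icc, Set.mem_Icc]
    rw [Metric.mem_ball] at hy
    have h1 : |(n:ℝ) - x 0| < h := lt_of_le_of_lt (abs_le_dist n x) hy
    rw [abs_lt] at h1
    exact ⟨Int.ceil_le.mpr (by linarith), Int.le_floor.mpr (by linarith)⟩
  have hN : (Lam ∩ Metric.ball x h).encard ≤ ((Finset.Icc a b).card : ℕ∞) := by
    refine le_trans (Set.encard_mono hsub) (le_trans (Set.encard_image_le _ _) ?_)
    rw [Set.encard_coe_eq_coe_finsetCard]
  calc ((Lam ∩ Metric.ball x h).encard : ℝ≥0∞)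
      ≤ ((Finset.Icc a b).card : ℝ≥0∞) := by exact_mod_cast hN
    _ ≤ ENNReal.ofReal (3*h) := by
        rw [Int.card_Icc, ← ENNReal.ofReal_natCast]
        apply ENNReal.ofReal_le_ofReal
        have hbr : (b:ℝ) ≤ x 0 + h := Int.floor_le _
        have har : x 0 - h ≤ (a:ℝ) := Int.le_ceil _
        have hr : ((b+1-a : ℤ):ℝ) ≤ 2*h+1 := by push_cast; linarith
        rcases le_or_gt (b+1-a) 0 with hle|hlt
        · rw [Int.toNat_of_nonpos hle]
          simp only [Nat.cast_zero]
          linarith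
        · have hcast : ((b+1-a).toNat : ℝ) = ((b+1-a : ℤ) : ℝ) := by
            exact_mod_cast congrArg (fun z : ℤ => (z:ℝ)) (Int.toNat_of_nonneg hlt.le)
          rw [hcast]
          linarith

lemma term_ge (r : ℝ) (m : ℕ) :
    ENNReal.ofReal ((2*m+1 : ℝ) / (hm m) ^ r) ≤
      ⨆ x : Plane, ((Lam ∩ Metric.ball x (hm m)).encard) / ENNReal.ofReal ((hm m) ^ r) := by
  refine le_trans ?_ (le_iSup (fun x : Plane =>
    ((Lam ∩ Metric.ball x (hm m)).encard) / ENNReal.ofReal ((hm m) ^ r)) (0:Plane))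
  have hpos : 0 < (hm m) ^ r := Real.rpow_pos_of_pos (hm_pos m) r
  rw [ENNReal.ofReal_div_of_pos hpos]
  exact ENNReal.div_le_div_right (encard_lower m) _

lemma density_one_ge : ENNReal.ofReal (Real.sqrt 2) ≤ beurlingDensity 1 Lam := by
  apply Filter.le_limsup_of_frequently_le ?_
  rw [Filter.frequently_atTop]
  intro c
  obtain ⟨m, hmge⟩ := exists_nat_ge c
  refine ⟨hm m, le_trans hmge (hm_ge m), ?_⟩
  refine le_trans ?_ (term_ge 1 m)
  apply ENNReal.ofReal_le_ofReal
  rw [Real.rpow_one, le_div_iff₀ (hm_pos m), sqrt2_mul_hm]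

lemma density_le (r : ℝ) (hr : 1 ≤ r) : beurlingDensity r Lam ≤ ENNReal.ofReal 3 := by
  refine Filter.limsup_le_of_le ?_ ?_
  · isBoundedDefault
  filter_upwards [Filter.eventually_ge_atTop (1:ℝ)] with h hh
  apply iSup_le; intro x
  have hpos0 : (0:ℝ) < h := lt_of_lt_of_le one_pos hh
  have hrpow : h ≤ h ^ r := by
    calc h = h ^ (1:ℝ) := (Real.rpow_one h).symm
      _ ≤ h ^ r := Real.rpow_le_rpow_of_exponent_le hh hr
  have hpos : 0 < h ^ r := Real.rpow_pos_of_pos hpos0 r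
  rw [ENNReal.div_le_iff (ENNReal.ofReal_pos.mpr hpos).ne' ENNReal.ofReal_ne_top]
  calc (Lam ∩ Metric.ball x h).encard ≤ ENNReal.ofReal (3*h) := encard_upper x h hh
    _ ≤ ENNReal.ofReal 3 * ENNReal.ofReal (h^r) := by
        rw [← ENNReal.ofReal_mul (by norm_num)]
        exact ENNReal.ofReal_le_ofReal (by nlinarith)

lemma density_top (r : ℝ) (hr0 : 0 < r) (hr1 : r < 1) : beurlingDensity r Lam = ⊤ := by
  by_contra hne
  have key : ∀ M : ℝ, ENNReal.ofReal M ≤ beurlingDensity r Lam := by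
    intro M
    apply Filter.le_limsup_of_frequently_le ?_
    rw [Filter.frequently_atTop]
    intro c
    have htend : Tendsto (fun h : ℝ => Real.sqrt 2 * h ^ (1-r)) atTop atTop :=
      (tendsto_rpow_atTop (by linarith)).const_mul_atTop
        (lt_of_lt_of_le one_pos sqrt2_ge_one)
    obtain ⟨c2, hc2⟩ := Filter.eventually_atTop.mp (Filter.tendsto_atTop.mp htend M)
    obtain ⟨m, hmge⟩ := exists_nat_ge (max c c2)
    have hmm : ∀ d : ℝ, d ≤ max c c2 → d ≤ hm m := fun d hd =>
      le_trans (le_trans hd hmge) (hm_ge m)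
    refine ⟨hm m, hmm c (le_max_left _ _), ?_⟩
    refine le_trans ?_ (term_ge r m)
    apply ENNReal.ofReal_le_ofReal
    have hpos := hm_pos m
    have hrp : (0:ℝ) < (hm m) ^ r := Real.rpow_pos_of_pos hpos r
    have hM : M ≤ Real.sqrt 2 * (hm m)^(1-r) := hc2 (hm m) (hmm c2 (le_max_right _ _))
    rw [le_div_iff₀ hrp]
    calc M * (hm m)^r ≤ (Real.sqrt 2 * (hm m)^(1-r)) * (hm m)^r :=
          mul_le_mul_of_nonneg_right hM hrp.le
      _ = Real.sqrt 2 * hm m := by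
          rw [mul_assoc, ← Real.rpow_add hpos, sub_add_cancel, Real.rpow_one]
      _ = 2*m+1 := sqrt2_mul_hm m
  have hlt := Ne.lt_top hne
  have hkey := key ((beurlingDensity r Lam).toReal + 1)
  rw [← ENNReal.ofReal_toReal hne] at hkey
  rw [ENNReal.ofReal_le_ofReal_iff ENNReal.toReal_nonneg] at hkey
  rw [ENNReal.toReal_ofReal ENNReal.toReal_nonneg] at hkey
  linarith

end Aux4
lemma dim_eq : beurlingDim Lam = 1 := by
  unfold beurlingDim
  have hsubset : Set.Ioo (0:ℝ) 1 ⊆ {r : ℝ | 0 < r ∧ beurlingDensity r Lam = ⊤} :=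
    fun r hr => ⟨hr.1, density_top r hr.1 hr.2⟩
  have hub : ∀ r ∈ {r : ℝ | 0 < r ∧ beurlingDensity r Lam = ⊤}, r ≤ 1 := by
    rintro r ⟨hr0, hrt⟩
    by_contra hgt
    push_neg at hgt
    have hle := density_le r hgt.le
    rw [hrt] at hle
    exact absurd (lt_of_le_of_lt hle ENNReal.ofReal_lt_top) (lt_irrefl ⊤)
  apply le_antisymm
  · exact csSup_le ⟨1/2, hsubset ⟨by norm_num, by norm_num⟩⟩ hub
  · rw [← csSup_Ioo one_pos]
    exact csSup_le_csSup ⟨1, hub⟩ (Set.nonempty_Ioo.mpr one_pos) hsubset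

/-- The diagonal `Λ = {(n, n) : n ∈ ℤ}` is a spectrum of `μ_{R,B}` with
`D_1^+(Λ) ≥ √2` and `dim_Be(Λ) = 1`. -/
theorem isSpectrum_muRB_diagonal :
    IsSpectrum muRB (Set.range fun n : ℤ => pt (n : ℝ) (n : ℝ)) ∧
      ENNReal.ofReal (Real.sqrt 2) ≤
        beurlingDensity 1 (Set.range fun n : ℤ => pt (n : ℝ) (n : ℝ)) ∧
      beurlingDim (Set.range fun n : ℤ => pt (n : ℝ) (n : ℝ)) = 1 := by
  exact ⟨⟨orthonormal_diag, span_closure_top⟩, density_one_ge, dim_eq⟩
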